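/- arXiv:1611.01420 — 3 statements merged into one kernel-verified Lean document; each statement's English description precedes it below -/
import Mathlib

section
/- Let λ be a real number, let Q : ℝ³ → ℂ³ and v : ℝ³ → ℂ be twice continuously differentiable on ℝ³, and suppose the consistency condition ∇·Q = iλv holds together with the vector Helmholtz equations ΔQ = −λ²Q (componentwise) and Δv = −λ²v. Then the field B := iλQ − ∇v + i∇×Q satisfies ∇×B = λB and ∇·B = 0 everywhere on ℝ³. -/
/-- The `i`-th partial derivative of a complex-valued function on `ℝ³`. -/
noncomputable def pd (i : Fin 3) (f : (Fin 3 → ℝ) → ℂ) (x : Fin 3 → ℝ) : ℂ :=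
  fderiv ℝ f x (Pi.single i 1)

/-- The curl of a complex vector field on `ℝ³`, defined componentwise. -/
noncomputable def curl (F : (Fin 3 → ℝ) → (Fin 3 → ℂ)) (x : Fin 3 → ℝ) : Fin 3 → ℂ :=
  ![pd 1 (fun y => F y 2) x - pd 2 (fun y => F y 1) x,
    pd 2 (fun y => F y 0) x - pd 0 (fun y => F y 2) x,
    pd 0 (fun y => F y 1) x - pd 1 (fun y => F y 0) x]

/-- The divergence of a complex vector field on `ℝ³`. -/
noncomputable def diverg (F : (Fin 3 → ℝ) → (Fin 3 → ℂ)) (x : Fin 3 → ℝ) : ℂ :=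
  pd 0 (fun y => F y 0) x + pd 1 (fun y => F y 1) x + pd 2 (fun y => F y 2) x

/-- The Laplacian `∂₁² + ∂₂² + ∂₃²` of a complex-valued function on `ℝ³`. -/
noncomputable def lap (f : (Fin 3 → ℝ) → ℂ) (x : Fin 3 → ℝ) : ℂ :=
  pd 0 (pd 0 f) x + pd 1 (pd 1 f) x + pd 2 (pd 2 f) x

lemma pd_pd {f : (Fin 3 → ℝ) → ℂ} (hf : ContDiff ℝ 2 f) (i j : Fin 3) (x : Fin 3 → ℝ) :
    pd i (pd j f) x = fderiv ℝ (fderiv ℝ f) x (Pi.single i 1) (Pi.single j 1) := by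
  have hdf : DifferentiableAt ℝ (fderiv ℝ f) x :=
    ((hf.fderiv_right (m := 1) (by norm_num)).differentiable one_ne_zero) x
  have h : HasFDerivAt (fun y => fderiv ℝ f y (Pi.single j 1))
      ((ContinuousLinearMap.apply ℝ ℂ (Pi.single j 1 : Fin 3 → ℝ)).comp
        (fderiv ℝ (fderiv ℝ f) x)) x :=
    (ContinuousLinearMap.apply ℝ ℂ (Pi.single j 1 : Fin 3 → ℝ)).hasFDerivAt.comp x
      hdf.hasFDerivAt
  have e1 : pd j f = fun y => fderiv ℝ f y (Pi.single j 1) := rfl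
  rw [pd, e1, h.fderiv]
  rfl

lemma pd_symm {f : (Fin 3 → ℝ) → ℂ} (hf : ContDiff ℝ 2 f) (i j : Fin 3) (x : Fin 3 → ℝ) :
    pd i (pd j f) x = pd j (pd i f) x := by
  rw [pd_pd hf, pd_pd hf]
  exact (hf.contDiffAt.isSymmSndFDerivAt (by norm_num)) _ _

lemma diffAt_pd {f : (Fin 3 → ℝ) → ℂ} (hf : ContDiff ℝ 2 f) (j : Fin 3) (x : Fin 3 → ℝ) :
    DifferentiableAt ℝ (pd j f) x := by
  have h : ContDiff ℝ 1 (fderiv ℝ f) := hf.fderiv_right (m := 1) (by norm_num)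
  exact ((h.differentiable one_ne_zero).clm_apply (differentiable_const _)) x

lemma pd_Bcomp {Q : (Fin 3 → ℝ) → (Fin 3 → ℂ)} {v : (Fin 3 → ℝ) → ℂ}
    (hQ : ContDiff ℝ 2 Q) (hv : ContDiff ℝ 2 v) (lam : ℝ) (j i a b c d : Fin 3)
    (hcurl : ∀ y, curl Q y i = pd a (fun z => Q z b) y - pd c (fun z => Q z d) y)
    (x : Fin 3 → ℝ) :
    pd j (fun y => Complex.I * lam * Q y i - pd i v y + Complex.I * curl Q y i) x
      = Complex.I * lam * pd j (fun y => Q y i) x - pd j (pd i v) x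
        + Complex.I * (pd j (pd a (fun z => Q z b)) x - pd j (pd c (fun z => Q z d)) x) := by
  have hQi : ∀ k, ContDiff ℝ 2 (fun y => Q y k) := fun k => (contDiff_pi.mp hQ) k
  have e : (fun y => Complex.I * lam * Q y i - pd i v y + Complex.I * curl Q y i)
      = fun y => Complex.I * lam * Q y i - pd i v y
          + Complex.I * (pd a (fun z => Q z b) y - pd c (fun z => Q z d) y) := by
    funext y; rw [hcurl y]
  rw [e]
  have H1 : HasFDerivAt (fun y => Q y i) (fderiv ℝ (fun y => Q y i) x) x :=
    (((hQi i).differentiable two_ne_zero) x).hasFDerivAt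
  have H2 : HasFDerivAt (pd i v) (fderiv ℝ (pd i v) x) x := (diffAt_pd hv i x).hasFDerivAt
  have H3 := (diffAt_pd (hQi b) a x).hasFDerivAt
  have H4 := (diffAt_pd (hQi d) c x).hasFDerivAt
  have H := ((H1.const_mul (Complex.I * lam)).sub H2).add ((H3.sub H4).const_mul Complex.I)
  change HasFDerivAt (fun y => Complex.I * lam * Q y i - pd i v y
      + Complex.I * (pd a (fun z => Q z b) y - pd c (fun z => Q z d) y)) _ x at H
  rw [pd, H.fderiv]
  simp [pd, mul_sub]

/-- the generalized Debye representation `B = iλQ − ∇v + i∇×Q`, with the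
consistency condition `∇·Q = iλv` and the Helmholtz equations for `Q` and `v`,
yields a divergence-free Beltrami field: `∇×B = λB` and `∇·B = 0`. -/
theorem debye_representation_gives_beltrami (lam : ℝ)
    (Q : (Fin 3 → ℝ) → (Fin 3 → ℂ)) (v : (Fin 3 → ℝ) → ℂ)
    (hQ : ContDiff ℝ 2 Q) (hv : ContDiff ℝ 2 v)
    (hconsist : ∀ x, diverg Q x = Complex.I * lam * v x)
    (hQHelm : ∀ x, ∀ i : Fin 3, lap (fun y => Q y i) x = -(lam : ℂ) ^ 2 * Q x i)
    (hvHelm : ∀ x, lap v x = -(lam : ℂ) ^ 2 * v x)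
    (B : (Fin 3 → ℝ) → (Fin 3 → ℂ))
    (hBdef : B = fun x i => Complex.I * lam * Q x i - pd i v x + Complex.I * curl Q x i) :
    ∀ x, curl B x = (lam : ℂ) • B x ∧ diverg B x = 0 := by
  subst hBdef
  have hQi : ∀ k, ContDiff ℝ 2 (fun y => Q y k) := fun k => (contDiff_pi.mp hQ) k
  have hI : Complex.I ^ 2 = -1 := Complex.I_sq
  have hc0 : ∀ y : Fin 3 → ℝ, curl Q y 0
      = pd 1 (fun z => Q z 2) y - pd 2 (fun z => Q z 1) y := fun y => by simp [curl]
  have hc1 : ∀ y : Fin 3 → ℝ, curl Q y 1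
      = pd 2 (fun z => Q z 0) y - pd 0 (fun z => Q z 2) y := fun y => by simp [curl]
  have hc2 : ∀ y : Fin 3 → ℝ, curl Q y 2
      = pd 0 (fun z => Q z 1) y - pd 1 (fun z => Q z 0) y := fun y => by simp [curl]
  intro x
  -- derivatives of the divergence identity
  have hdiv : ∀ j : Fin 3, pd j (pd 0 (fun y => Q y 0)) x + pd j (pd 1 (fun y => Q y 1)) x
      + pd j (pd 2 (fun y => Q y 2)) x = Complex.I * lam * pd j v x := by
    intro j
    have e : (fun y => pd 0 (fun z => Q z 0) y + pd 1 (fun z => Q z 1) y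
        + pd 2 (fun z => Q z 2) y) = fun y => Complex.I * lam * v y :=
      funext fun y => hconsist y
    have H := ((diffAt_pd (hQi 0) 0 x).hasFDerivAt.add
      (diffAt_pd (hQi 1) 1 x).hasFDerivAt).add (diffAt_pd (hQi 2) 2 x).hasFDerivAt
    change HasFDerivAt (fun y => pd 0 (fun z => Q z 0) y + pd 1 (fun z => Q z 1) y
        + pd 2 (fun z => Q z 2) y) _ x at H
    rw [e] at H
    have H2 := ((hv.differentiable two_ne_zero) x).hasFDerivAt.const_mul (Complex.I * lam)
    have hu := H.unique H2
    have := congrArg (fun L => L (Pi.single j 1)) hu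
    simpa [pd] using this
  -- the nine partial derivatives of components of B
  have k00 := pd_Bcomp hQ hv lam 0 0 1 2 2 1 hc0 x
  have k10 := pd_Bcomp hQ hv lam 1 0 1 2 2 1 hc0 x
  have k20 := pd_Bcomp hQ hv lam 2 0 1 2 2 1 hc0 x
  have k01 := pd_Bcomp hQ hv lam 0 1 2 0 0 2 hc1 x
  have k11 := pd_Bcomp hQ hv lam 1 1 2 0 0 2 hc1 x
  have k21 := pd_Bcomp hQ hv lam 2 1 2 0 0 2 hc1 x
  have k02 := pd_Bcomp hQ hv lam 0 2 0 1 1 0 hc2 x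
  have k12 := pd_Bcomp hQ hv lam 1 2 0 1 1 0 hc2 x
  have k22 := pd_Bcomp hQ hv lam 2 2 0 1 1 0 hc2 x
  have hh0 : pd 0 (pd 0 (fun y => Q y 0)) x + pd 1 (pd 1 (fun y => Q y 0)) x
      + pd 2 (pd 2 (fun y => Q y 0)) x = -(lam : ℂ) ^ 2 * Q x 0 := hQHelm x 0
  have hh1 : pd 0 (pd 0 (fun y => Q y 1)) x + pd 1 (pd 1 (fun y => Q y 1)) x
      + pd 2 (pd 2 (fun y => Q y 1)) x = -(lam : ℂ) ^ 2 * Q x 1 := hQHelm x 1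
  have hh2 : pd 0 (pd 0 (fun y => Q y 2)) x + pd 1 (pd 1 (fun y => Q y 2)) x
      + pd 2 (pd 2 (fun y => Q y 2)) x = -(lam : ℂ) ^ 2 * Q x 2 := hQHelm x 2
  have hvh : pd 0 (pd 0 v) x + pd 1 (pd 1 v) x + pd 2 (pd 2 v) x
      = -(lam : ℂ) ^ 2 * v x := hvHelm x
  have hc : pd 0 (fun y => Q y 0) x + pd 1 (fun y => Q y 1) x + pd 2 (fun y => Q y 2) x
      = Complex.I * lam * v x := hconsist x
  constructor
  · funext i
    fin_cases i
    · show pd 1 (fun y => Complex.I * ↑lam * Q y 2 - pd 2 v y + Complex.I * curl Q y 2) x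
        - pd 2 (fun y => Complex.I * ↑lam * Q y 1 - pd 1 v y + Complex.I * curl Q y 1) x
        = ((lam : ℂ) • fun i => Complex.I * ↑lam * Q x i - pd i v x + Complex.I * curl Q x i) 0
      rw [k12, k21]
      have rhs : ((lam : ℂ) • fun i => Complex.I * ↑lam * Q x i - pd i v x
          + Complex.I * curl Q x i) 0 = (lam : ℂ) * (Complex.I * lam * Q x 0 - pd 0 v x
          + Complex.I * (pd 1 (fun z => Q z 2) x - pd 2 (fun z => Q z 1) x)) := by
        simp [hc0 x]
      rw [rhs]
      have sv := pd_symm hv 1 2 x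
      have s1 := pd_symm (hQi 1) 1 0 x
      have s2 := pd_symm (hQi 2) 2 0 x
      linear_combination (-1 : ℂ) * sv + Complex.I * s1 + Complex.I * s2
        + Complex.I * hdiv 0 - Complex.I * hh0 + (lam : ℂ) * pd 0 v x * hI
    · show pd 2 (fun y => Complex.I * ↑lam * Q y 0 - pd 0 v y + Complex.I * curl Q y 0) x
        - pd 0 (fun y => Complex.I * ↑lam * Q y 2 - pd 2 v y + Complex.I * curl Q y 2) x
        = ((lam : ℂ) • fun i => Complex.I * ↑lam * Q x i - pd i v x + Complex.I * curl Q x i) 1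
      rw [k20, k02]
      have rhs : ((lam : ℂ) • fun i => Complex.I * ↑lam * Q x i - pd i v x
          + Complex.I * curl Q x i) 1 = (lam : ℂ) * (Complex.I * lam * Q x 1 - pd 1 v x
          + Complex.I * (pd 2 (fun z => Q z 0) x - pd 0 (fun z => Q z 2) x)) := by
        simp [hc1 x]
      rw [rhs]
      have sv := pd_symm hv 2 0 x
      have s1 := pd_symm (hQi 2) 2 1 x
      have s2 := pd_symm (hQi 0) 0 1 x
      linear_combination (-1 : ℂ) * sv + Complex.I * s1 + Complex.I * s2
        + Complex.I * hdiv 1 - Complex.I * hh1 + (lam : ℂ) * pd 1 v x * hI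
    · show pd 0 (fun y => Complex.I * ↑lam * Q y 1 - pd 1 v y + Complex.I * curl Q y 1) x
        - pd 1 (fun y => Complex.I * ↑lam * Q y 0 - pd 0 v y + Complex.I * curl Q y 0) x
        = ((lam : ℂ) • fun i => Complex.I * ↑lam * Q x i - pd i v x + Complex.I * curl Q x i) 2
      rw [k01, k10]
      have rhs : ((lam : ℂ) • fun i => Complex.I * ↑lam * Q x i - pd i v x
          + Complex.I * curl Q x i) 2 = (lam : ℂ) * (Complex.I * lam * Q x 2 - pd 2 v x
          + Complex.I * (pd 0 (fun z => Q z 1) x - pd 1 (fun z => Q z 0) x)) := by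
        simp [hc2 x]
      rw [rhs]
      have sv := pd_symm hv 0 1 x
      have s1 := pd_symm (hQi 0) 0 2 x
      have s2 := pd_symm (hQi 1) 1 2 x
      linear_combination (-1 : ℂ) * sv + Complex.I * s1 + Complex.I * s2
        + Complex.I * hdiv 2 - Complex.I * hh2 + (lam : ℂ) * pd 2 v x * hI
  · show pd 0 (fun y => Complex.I * lam * Q y 0 - pd 0 v y + Complex.I * curl Q y 0) x
      + pd 1 (fun y => Complex.I * lam * Q y 1 - pd 1 v y + Complex.I * curl Q y 1) x
      + pd 2 (fun y => Complex.I * lam * Q y 2 - pd 2 v y + Complex.I * curl Q y 2) x = 0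
    rw [k00, k11, k22]
    have s1 := pd_symm (hQi 2) 0 1 x
    have s2 := pd_symm (hQi 1) 0 2 x
    have s3 := pd_symm (hQi 0) 1 2 x
    linear_combination Complex.I * (lam : ℂ) * hc - hvh + Complex.I * s1 - Complex.I * s2
      + Complex.I * s3 + (lam : ℂ) ^ 2 * v x * hI
end

section
/- Let r > 0, r' > 0 and z, z' ∈ ℝ with (r, z) ≠ (r', z'). Define R(θ) = √(r² + r'² − 2rr'cos θ + (z−z')²), χ = (r² + r'² + (z−z')²)/(2rr'), and k = √(2/(1+χ)). Then ∫_{−π}^{π} dθ / R(θ) = (2k/√(rr')) · K(k), where K(k) = ∫_0^{π/2} dθ / √(1 − k² sin²θ) is the complete elliptic integral of the first kind. -/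
open MeasureTheory

/-- the axisymmetric (`ℓ = 0`) modal Green's function of the Laplace kernel
in cylindrical coordinates, expressed via the complete elliptic integral of the first
kind: `∫_{−π}^{π} dθ/R(θ) = (2k/√(rr')) K(k)`. -/
theorem laplace_modal_kernel_elliptic_K
    (r r' z z' : ℝ) (hr : 0 < r) (hr' : 0 < r') (hne : (r, z) ≠ (r', z'))
    (R : ℝ → ℝ)
    (hR : R = fun θ => Real.sqrt (r ^ 2 + r' ^ 2 - 2 * r * r' * Real.cos θ + (z - z') ^ 2))
    (χ k : ℝ)
    (hχ : χ = (r ^ 2 + r' ^ 2 + (z - z') ^ 2) / (2 * r * r'))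
    (hk : k = Real.sqrt (2 / (1 + χ)))
    (K : ℝ)
    (hK : K = ∫ θ in (0 : ℝ)..(Real.pi / 2),
      1 / Real.sqrt (1 - k ^ 2 * Real.sin θ ^ 2)) :
    (∫ θ in (-Real.pi)..Real.pi, 1 / R θ) = 2 * k / Real.sqrt (r * r') * K := by
  have h2rr : (0:ℝ) < 2 * r * r' := by positivity
  have hχ1 : 1 < χ := by
    rw [hχ, lt_div_iff₀ h2rr]
    have h : r ≠ r' ∨ z ≠ z' := by
      by_contra h; push_neg at h; exact hne (by rw [h.1, h.2])
    rcases h with h | h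
    · nlinarith [sq_nonneg (z - z'), sq_pos_of_ne_zero (sub_ne_zero.mpr h)]
    · nlinarith [sq_nonneg (r - r'), sq_pos_of_ne_zero (sub_ne_zero.mpr h)]
  have h1χ : (0:ℝ) < 1 + χ := by linarith
  have hk2 : k ^ 2 = 2 / (1 + χ) := by
    rw [hk, Real.sq_sqrt (by positivity)]
  have hk2lt : k ^ 2 < 1 := by rw [hk2, div_lt_one h1χ]; linarith
  set c := Real.sqrt (2 * r * r' * (1 + χ)) with hc
  have hcpos : 0 < c := Real.sqrt_pos.mpr (by positivity)
  have hpos : ∀ u : ℝ, 0 < 1 - k ^ 2 * Real.cos u ^ 2 := by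
    intro u
    nlinarith [Real.cos_sq_le_one u, sq_nonneg k, sq_nonneg (Real.cos u)]
  have hχ' : 2 * r * r' * χ = r ^ 2 + r' ^ 2 + (z - z') ^ 2 := by
    rw [hχ]; field_simp
  have hpoint : ∀ θ, R θ = c * Real.sqrt (1 - k ^ 2 * Real.cos (θ / 2) ^ 2) := by
    intro θ
    rw [hR, hc, ← Real.sqrt_mul (by positivity)]
    show Real.sqrt (r ^ 2 + r' ^ 2 - 2 * r * r' * Real.cos θ + (z - z') ^ 2) = _
    congr 1
    have hcosθ : Real.cos θ = 2 * Real.cos (θ / 2) ^ 2 - 1 := by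
      have h := Real.cos_sq (θ / 2)
      rw [show 2 * (θ / 2) = θ by ring] at h
      linarith
    rw [hcosθ, hk2]
    field_simp
    linear_combination (-1 : ℝ) * hχ'
  set f : ℝ → ℝ := fun u => 1 / Real.sqrt (1 - k ^ 2 * Real.cos u ^ 2) with hf
  have hfc : Continuous f := by
    apply Continuous.div continuous_const
    · exact Real.continuous_sqrt.comp (by continuity)
    · intro u; exact (Real.sqrt_pos.mpr (hpos u)).ne'
  have step1 : (∫ θ in (-Real.pi)..Real.pi, 1 / R θ)
      = ∫ θ in (-Real.pi)..Real.pi, (1 / c) * f (θ / 2) := by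
    refine intervalIntegral.integral_congr fun θ _ => ?_
    rw [hpoint θ, hf]
    simp only
    rw [one_div, one_div, one_div, mul_inv]
  have step2 : (∫ θ in (-Real.pi)..Real.pi, (1 / c) * f (θ / 2))
      = (1 / c) * (2 * ∫ u in (-(Real.pi/2))..(Real.pi/2), f u) := by
    rw [intervalIntegral.integral_const_mul,
      intervalIntegral.integral_comp_div f two_ne_zero]
    norm_num [neg_div]
  have heven : (∫ u in (-(Real.pi/2))..(Real.pi/2), f u)
      = 2 * ∫ u in (0:ℝ)..(Real.pi/2), f u := by
    have h1 : (∫ u in (-(Real.pi/2))..(0:ℝ), f u) = ∫ u in (0:ℝ)..(Real.pi/2), f u := by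
      have h := intervalIntegral.integral_comp_neg f (a := 0) (b := Real.pi/2)
      simp only [neg_zero] at h
      rw [← h]
      refine intervalIntegral.integral_congr fun u _ => ?_
      simp [hf]
    rw [← intervalIntegral.integral_add_adjacent_intervals
      (hfc.intervalIntegrable (-(Real.pi/2)) 0) (hfc.intervalIntegrable 0 (Real.pi/2)), h1]
    ring
  have hsin : (∫ u in (0:ℝ)..(Real.pi/2), f u) = K := by
    have h := intervalIntegral.integral_comp_sub_left f (Real.pi/2)
      (a := 0) (b := Real.pi/2)
    simp only [sub_self, sub_zero] at h
    rw [hK, ← h]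
    refine intervalIntegral.integral_congr fun u _ => ?_
    simp [hf, Real.cos_pi_div_two_sub]
  have hck : c * k = 2 * Real.sqrt (r * r') := by
    rw [hc, hk, ← Real.sqrt_mul (by positivity)]
    rw [show 2 * r * r' * (1 + χ) * (2 / (1 + χ)) = 2 ^ 2 * (r * r') by
      field_simp]
    rw [Real.sqrt_mul (by positivity), Real.sqrt_sq (by norm_num)]
  rw [step1, step2, heven, hsin]
  have hs : 0 < Real.sqrt (r * r') := Real.sqrt_pos.mpr (by positivity)
  field_simp
  linear_combination (-K)*hck
end

section
/- Let r > 0, r' > 0 and z, z' ∈ ℝ with (r, z) ≠ (r', z'). Define R(θ) = √(r² + r'² − 2rr'cos θ + (z−z')²), χ = (r² + r'² + (z−z')²)/(2rr'), and k = √(2/(1+χ)). Then ∫_{−π}^{π} cos θ dθ / R(θ) = (2/√(rr')) · ( χ k K(k) − (2/k) E(k) ), where K(k) = ∫_0^{π/2} dθ / √(1 − k² sin²θ) and E(k) = ∫_0^{π/2} √(1 − k² sin²θ) dθ are the complete elliptic integrals of the first and second kind. -/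
open MeasureTheory

/-- the `ℓ = 1` modal Green's function of the Laplace kernel in cylindrical
coordinates, expressed via complete elliptic integrals:
`∫_{−π}^{π} cos θ dθ/R(θ) = (2/√(rr')) (χ k K(k) − (2/k) E(k))`. -/
theorem laplace_modal_kernel_elliptic_KE
    (r r' z z' : ℝ) (hr : 0 < r) (hr' : 0 < r') (hne : (r, z) ≠ (r', z'))
    (R : ℝ → ℝ)
    (hR : R = fun θ => Real.sqrt (r ^ 2 + r' ^ 2 - 2 * r * r' * Real.cos θ + (z - z') ^ 2))
    (χ k : ℝ)
    (hχ : χ = (r ^ 2 + r' ^ 2 + (z - z') ^ 2) / (2 * r * r'))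
    (hk : k = Real.sqrt (2 / (1 + χ)))
    (K E : ℝ)
    (hK : K = ∫ θ in (0 : ℝ)..(Real.pi / 2),
      1 / Real.sqrt (1 - k ^ 2 * Real.sin θ ^ 2))
    (hE : E = ∫ θ in (0 : ℝ)..(Real.pi / 2),
      Real.sqrt (1 - k ^ 2 * Real.sin θ ^ 2)) :
    (∫ θ in (-Real.pi)..Real.pi, Real.cos θ / R θ)
      = 2 / Real.sqrt (r * r') * (χ * k * K - 2 / k * E) := by
  have hrr : (0:ℝ) < r * r' := mul_pos hr hr'
  -- χ > 1
  have hsq : 0 < (r - r') ^ 2 + (z - z') ^ 2 := by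
    rcases eq_or_ne r r' with h | h
    · have hz : z ≠ z' := fun hz => hne (by rw [h, hz])
      have hz' : z - z' ≠ 0 := sub_ne_zero.mpr hz
      have : (0:ℝ) < (z - z') ^ 2 := sq_pos_of_ne_zero hz'
      nlinarith [sq_nonneg (r - r')]
    · have hh : r - r' ≠ 0 := sub_ne_zero.mpr h
      have : (0:ℝ) < (r - r') ^ 2 := sq_pos_of_ne_zero hh
      nlinarith [sq_nonneg (z - z')]
  have hχ1 : 1 < χ := by
    rw [hχ, lt_div_iff₀ (by positivity)]
    nlinarith
  have hc0 : (0:ℝ) < 1 + χ := by linarith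
  have hk2 : k ^ 2 = 2 / (1 + χ) := by
    rw [hk, Real.sq_sqrt (by positivity)]
  have hk0 : 0 < k := by rw [hk]; positivity
  have hk1 : k < 1 := by
    have h1 : k ^ 2 < 1 := by rw [hk2, div_lt_one hc0]; linarith
    nlinarith
  set s := Real.sqrt (1 + χ) with hsdef
  have hs0 : 0 < s := Real.sqrt_pos.mpr hc0
  have hs2 : s ^ 2 = 1 + χ := Real.sq_sqrt hc0.le
  have hks : k = Real.sqrt 2 / s := by
    rw [hk, Real.sqrt_div (by norm_num : (0:ℝ) ≤ 2)]
  have hsk2 : s ^ 2 * k ^ 2 = 2 := by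
    rw [hs2, hk2]; field_simp
  -- positivity of 1 - k² sin²
  have hpos : ∀ φ : ℝ, 0 < 1 - k ^ 2 * Real.sin φ ^ 2 := by
    intro φ
    have h1 : Real.sin φ ^ 2 ≤ 1 := Real.sin_sq_le_one φ
    nlinarith [sq_nonneg (Real.sin φ)]
  -- V and W
  set V : ℝ → ℝ := fun φ => Real.sqrt (1 - k ^ 2 * Real.sin φ ^ 2) with hV
  have hV0 : ∀ φ, 0 < V φ := fun φ => Real.sqrt_pos.mpr (hpos φ)
  have hV2 : ∀ φ, V φ ^ 2 = 1 - k ^ 2 * Real.sin φ ^ 2 :=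
    fun φ => Real.sq_sqrt (hpos φ).le
  have hcont1 : Continuous fun φ : ℝ => 1 - k ^ 2 * Real.sin φ ^ 2 := by fun_prop
  have hcontV : Continuous V := hcont1.sqrt
  have hcontW : Continuous fun φ => 1 / V φ :=
    continuous_const.div hcontV (fun φ => (hV0 φ).ne')
  -- g
  set g : ℝ → ℝ := fun θ => Real.cos θ / Real.sqrt (χ - Real.cos θ) with hg
  have hχcos : ∀ θ, 0 < χ - Real.cos θ := by
    intro θ
    have := Real.cos_le_one θ
    linarith
  -- Step C : pointwise identity
  have hC : ∀ φ : ℝ, g (Real.pi - 2 * φ) = χ / s * (1 / V φ) - s * V φ := by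
    intro φ
    have hcos : Real.cos (Real.pi - 2 * φ) = 2 * Real.sin φ ^ 2 - 1 := by
      rw [Real.cos_pi_sub, Real.cos_two_mul]
      have := Real.sin_sq_add_cos_sq φ
      nlinarith
    have harg : χ - Real.cos (Real.pi - 2 * φ) = s ^ 2 * (1 - k ^ 2 * Real.sin φ ^ 2) := by
      rw [hcos]
      linear_combination Real.sin φ ^ 2 * hsk2 - hs2
    have hsqrt : Real.sqrt (χ - Real.cos (Real.pi - 2 * φ)) = s * V φ := by
      rw [harg, Real.sqrt_mul (sq_nonneg s), Real.sqrt_sq hs0.le]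
    have h2sin : 2 * Real.sin φ ^ 2 = s ^ 2 * (1 - V φ ^ 2) := by
      rw [hV2]; linear_combination (-(Real.sin φ ^ 2)) * hsk2
    show Real.cos (Real.pi - 2 * φ) / Real.sqrt (χ - Real.cos (Real.pi - 2 * φ))
        = χ / s * (1 / V φ) - s * V φ
    rw [hsqrt, hcos]
    have hv := hV0 φ
    have hrw : χ / s * (1 / V φ) - s * V φ = (χ - s ^ 2 * V φ ^ 2) / (s * V φ) := by
      field_simp
    rw [hrw]
    congr 1
    linear_combination h2sin + hs2
  -- Step B : substitution θ = π - 2φ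
  have hB : (∫ θ in (-Real.pi)..Real.pi, g θ)
      = 2 * ∫ φ in (0:ℝ)..Real.pi, g (Real.pi - 2 * φ) := by
    have h1 : (∫ φ in (0:ℝ)..Real.pi, (fun u => g (Real.pi - u)) (2 * φ))
        = (2:ℝ)⁻¹ • ∫ u in (2*(0:ℝ))..(2*Real.pi), g (Real.pi - u) :=
      intervalIntegral.integral_comp_mul_left (fun u => g (Real.pi - u)) (two_ne_zero : (2:ℝ) ≠ 0)
    have h2 : (∫ u in (2*(0:ℝ))..(2*Real.pi), g (Real.pi - u))
        = ∫ x in (Real.pi - 2*Real.pi)..(Real.pi - 2*(0:ℝ)), g x :=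
      intervalIntegral.integral_comp_sub_left g Real.pi
    have h3 : Real.pi - 2*Real.pi = -Real.pi := by ring
    have h4 : Real.pi - 2*(0:ℝ) = Real.pi := by ring
    rw [h3, h4] at h2
    rw [show (∫ φ in (0:ℝ)..Real.pi, g (Real.pi - 2 * φ))
        = ∫ φ in (0:ℝ)..Real.pi, (fun u => g (Real.pi - u)) (2 * φ) from rfl,
      h1, h2, smul_eq_mul]
    ring
  -- F and its halving
  set F : ℝ → ℝ := fun φ => χ / s * (1 / V φ) - s * V φ with hF
  have hcontF : Continuous F := (continuous_const.mul hcontW).sub (continuous_const.mul hcontV)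
  have hFsym : ∀ φ, F (Real.pi - φ) = F φ := by
    intro φ
    simp only [hF, hV, Real.sin_pi_sub]
  have hD : (∫ φ in (0:ℝ)..Real.pi, F φ) = 2 * ∫ φ in (0:ℝ)..(Real.pi/2), F φ := by
    have hadd : (∫ φ in (0:ℝ)..(Real.pi/2), F φ) + (∫ φ in (Real.pi/2)..Real.pi, F φ)
        = ∫ φ in (0:ℝ)..Real.pi, F φ :=
      intervalIntegral.integral_add_adjacent_intervals
        (hcontF.intervalIntegrable _ _) (hcontF.intervalIntegrable _ _)
    have h2 : (∫ φ in (0:ℝ)..(Real.pi/2), F (Real.pi - φ))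
        = ∫ x in (Real.pi - Real.pi/2)..(Real.pi - 0), F x :=
      intervalIntegral.integral_comp_sub_left F Real.pi
    have h3 : Real.pi - Real.pi/2 = Real.pi/2 := by ring
    rw [h3, sub_zero] at h2
    have h4 : (∫ φ in (0:ℝ)..(Real.pi/2), F (Real.pi - φ))
        = ∫ φ in (0:ℝ)..(Real.pi/2), F φ := by
      congr 1
      ext φ
      exact hFsym φ
    rw [← hadd, ← h2, h4]
    ring
  -- split the half integral
  have hsplit : (∫ φ in (0:ℝ)..(Real.pi/2), F φ) = χ / s * K - s * E := by
    rw [hK, hE, hF]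
    beta_reduce
    rw [intervalIntegral.integral_sub (f := fun φ => χ / s * (1 / V φ)) (g := fun φ => s * V φ)
      ((continuous_const.mul hcontW).intervalIntegrable _ _)
      ((continuous_const.mul hcontV).intervalIntegrable _ _),
      intervalIntegral.integral_const_mul, intervalIntegral.integral_const_mul]
  -- rewrite the original integrand
  have hRg : ∀ θ, Real.cos θ / R θ = (Real.sqrt (2 * (r * r')))⁻¹ * g θ := by
    intro θ
    have hval : r ^ 2 + r' ^ 2 - 2 * r * r' * Real.cos θ + (z - z') ^ 2
        = 2 * (r * r') * (χ - Real.cos θ) := by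
      have : χ * (2 * r * r') = r ^ 2 + r' ^ 2 + (z - z') ^ 2 := by
        rw [hχ]; field_simp
      linear_combination -this
    rw [hR]
    simp only
    rw [hval, Real.sqrt_mul (by positivity) , div_mul_eq_div_div_swap, div_eq_inv_mul]
  have hmain : (∫ θ in (-Real.pi)..Real.pi, Real.cos θ / R θ)
      = (Real.sqrt (2 * (r * r')))⁻¹ * ∫ θ in (-Real.pi)..Real.pi, g θ := by
    rw [← intervalIntegral.integral_const_mul]
    congr 1
    ext θ
    exact hRg θ
  have hBC : (∫ θ in (-Real.pi)..Real.pi, g θ) = 2 * (2 * (χ / s * K - s * E)) := by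
    rw [hB, ← hsplit, ← hD]
    congr 1
    apply intervalIntegral.integral_congr
    intro φ _
    exact hC φ
  rw [hmain, hBC]
  -- final algebra
  have hsqrt2 : Real.sqrt (2 * (r * r')) = Real.sqrt 2 * Real.sqrt (r * r') :=
    Real.sqrt_mul (by norm_num) _
  set t := Real.sqrt (r * r') with ht
  have ht0 : 0 < t := Real.sqrt_pos.mpr hrr
  set u := Real.sqrt 2 with hu
  have hu0 : 0 < u := Real.sqrt_pos.mpr (by norm_num)
  have hu2 : u ^ 2 = 2 := Real.sq_sqrt (by norm_num)
  have h2u : 2 / (u / s) = u * s := by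
    rw [div_div_eq_mul_div, div_eq_iff hu0.ne']
    linear_combination (-s) * hu2
  rw [hsqrt2, hks, h2u]
  field_simp
  ring_nf
  linear_combination (s ^ 2 * E - χ * K) * hu2
end
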